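/- Two Alexander biquandles M and M' are isomorphic as biquandles if and only if (i) there is an isomorphism of Z[s^{±1}, t^{±1}]-modules h : (1−st)M → (1−st)M', and (ii) for every set of coset representatives A of M/(1−st)M containing 0, there is a set of coset representatives A' of M'/(1−st)M' and a bijection g : O_s(A) → O_s(A') with g(A) = A' satisfying (1−st)·g(α) = h((1−st)·α) and g(s·α + ω) = s·g(α) + h(ω) for all α ∈ A and ω ∈ (1−st)M with s·α + ω ∈ O_s(A). -/

import Mathlib

noncomputable section

/-- The Laurent polynomial ring `ℤ[s^{±1}, t^{±1}]` in two variables,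
realized as the group algebra of `ℤ × ℤ` over `ℤ`. -/
abbrev L : Type := AddMonoidAlgebra ℤ (ℤ × ℤ)

/-- The variable `s`. -/
def sL : L := AddMonoidAlgebra.single (1, 0) 1
/-- The variable `t`. -/
def tL : L := AddMonoidAlgebra.single (0, 1) 1
/-- The inverse `s⁻¹`. -/
def sLi : L := AddMonoidAlgebra.single (-1, 0) 1
/-- The inverse `t⁻¹`. -/
def tLi : L := AddMonoidAlgebra.single (0, -1) 1

/-- `s` as a unit of `L`. -/
def sU : Lˣ where
  val := sL
  inv := sLi
  val_inv := by
    simp [sL, sLi, AddMonoidAlgebra.single_mul_single, AddMonoidAlgebra.one_def, Prod.ext_iff]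
    rfl
  inv_val := by
    simp [sL, sLi, AddMonoidAlgebra.single_mul_single, AddMonoidAlgebra.one_def, Prod.ext_iff]
    rfl

/-- The submodule `(1-st)M`. -/
def Dsub (M : Type) [AddCommGroup M] [Module L M] : Submodule L M :=
  LinearMap.range (LinearMap.lsmul L M (1 - sL * tL))

/-- The `s`-orbit `O_s(X)` of a subset `X ⊆ M`. -/
def Os {M : Type} [AddCommGroup M] [Module L M] (X : Set M) : Set M :=
  { y | ∃ (n : ℤ) (x : M), x ∈ X ∧ y = ((sU ^ n : Lˣ) : L) • x }

/-- `A` is a set of coset representatives for `M/(1-st)M`. -/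
def IsCR (M : Type) [AddCommGroup M] [Module L M] (A : Set M) : Prop :=
  ∀ x : M, ∃! a, a ∈ A ∧ x - a ∈ Dsub M

/-- `f` preserves the four Alexander biquandle operations. -/
def IsBqHom {M M' : Type} [AddCommGroup M] [Module L M] [AddCommGroup M'] [Module L M']
    (f : M → M') : Prop :=
  (∀ x y : M, f (tL • x + (1 - sL * tL) • y) = tL • f x + (1 - sL * tL) • f y) ∧
  (∀ x : M, f (sL • x) = sL • f x) ∧
  (∀ x y : M, f (tLi • x + (1 - sLi * tLi) • y) = tLi • f x + (1 - sLi * tLi) • f y) ∧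
  (∀ x : M, f (sLi • x) = sLi • f x)


def tU : Lˣ where
  val := tL
  inv := tLi
  val_inv := by
    simp [tL, tLi, AddMonoidAlgebra.single_mul_single, AddMonoidAlgebra.one_def, Prod.ext_iff]
    rfl
  inv_val := by
    simp [tL, tLi, AddMonoidAlgebra.single_mul_single, AddMonoidAlgebra.one_def, Prod.ext_iff]
    rfl

lemma sLi_mul_sL : sLi * sL = 1 := sU.inv_val
lemma sL_mul_sLi : sL * sLi = 1 := sU.val_inv
lemma tLi_mul_tL : tLi * tL = 1 := tU.inv_val
lemma tL_mul_tLi : tL * tLi = 1 := tU.val_inv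


lemma sU_val_zpow : ∀ a : ℤ, ((sU ^ a : Lˣ) : L) = AddMonoidAlgebra.single (a, 0) 1 := by
  intro a
  induction a using Int.induction_on with
  | zero => simp [AddMonoidAlgebra.one_def]; rfl
  | succ n ih =>
      rw [zpow_add_one, Units.val_mul, ih]
      show _ * sL = _
      simp [sL, AddMonoidAlgebra.single_mul_single]
  | pred n ih =>
      rw [zpow_sub_one, Units.val_mul, ih]
      show _ * sLi = _
      simp [sLi, AddMonoidAlgebra.single_mul_single]
      ring_nf

lemma tU_val_zpow : ∀ a : ℤ, ((tU ^ a : Lˣ) : L) = AddMonoidAlgebra.single (0, a) 1 := by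
  intro a
  induction a using Int.induction_on with
  | zero => simp [AddMonoidAlgebra.one_def]; rfl
  | succ n ih =>
      rw [zpow_add_one, Units.val_mul, ih]
      show _ * tL = _
      simp [tL, AddMonoidAlgebra.single_mul_single]
  | pred n ih =>
      rw [zpow_sub_one, Units.val_mul, ih]
      show _ * tLi = _
      simp [tLi, AddMonoidAlgebra.single_mul_single]
      ring_nf

lemma single_eq_smul (a b n : ℤ) :
    (AddMonoidAlgebra.single (a, b) n : L) = n • (((sU ^ a : Lˣ) : L) * ((tU ^ b : Lˣ) : L)) := by
  rw [sU_val_zpow, tU_val_zpow, AddMonoidAlgebra.single_mul_single]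
  simp [Finsupp.smul_single]

lemma smul_ext {M M' : Type} [AddCommGroup M] [Module L M] [AddCommGroup M'] [Module L M']
    (φ : M →+ M')
    (hs : ∀ x, φ (sL • x) = sL • φ x) (hsi : ∀ x, φ (sLi • x) = sLi • φ x)
    (ht : ∀ x, φ (tL • x) = tL • φ x) (hti : ∀ x, φ (tLi • x) = tLi • φ x) :
    ∀ (c : L) (x : M), φ (c • x) = c • φ x := by
  have hS : ∀ (n : ℤ) (x : M), φ (((sU ^ n : Lˣ) : L) • x) = ((sU ^ n : Lˣ) : L) • φ x := by
    intro n
    induction n using Int.induction_on with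
    | zero => simp
    | succ n ih =>
        intro x
        rw [zpow_add_one, Units.val_mul, mul_smul, mul_smul,
          show (sU : Lˣ).val = sL from rfl, ih, hs]
    | pred n ih =>
        intro x
        rw [zpow_sub_one, Units.val_mul, mul_smul, mul_smul,
          show ((sU⁻¹ : Lˣ) : L) = sLi from rfl, ih, hsi]
  have hT : ∀ (n : ℤ) (x : M), φ (((tU ^ n : Lˣ) : L) • x) = ((tU ^ n : Lˣ) : L) • φ x := by
    intro n
    induction n using Int.induction_on with
    | zero => simp
    | succ n ih =>
        intro x
        rw [zpow_add_one, Units.val_mul, mul_smul, mul_smul,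
          show (tU : Lˣ).val = tL from rfl, ih, ht]
    | pred n ih =>
        intro x
        rw [zpow_sub_one, Units.val_mul, mul_smul, mul_smul,
          show ((tU⁻¹ : Lˣ) : L) = tLi from rfl, ih, hti]
  intro c
  induction c using AddMonoidAlgebra.induction with
  | zero => simp
  | single_add p n f _ _ ihf =>
      intro x
      obtain ⟨a, b⟩ := p
      have hmono : ∀ z : M, (AddMonoidAlgebra.single (a, b) n : L) • z
          = n • (((sU ^ a : Lˣ) : L) • (((tU ^ b : Lˣ) : L) • z)) := by
        intro z
        rw [single_eq_smul, smul_assoc, mul_smul]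
      rw [add_smul, map_add, ihf, add_smul]
      congr 1
      rw [hmono, map_zsmul, hS, hT, single_eq_smul, smul_assoc, mul_smul]





lemma mem_Dsub {M : Type} [AddCommGroup M] [Module L M] {x : M} :
    x ∈ Dsub M ↔ ∃ y : M, (1 - sL * tL) • y = x := by
  constructor
  · rintro ⟨y, rfl⟩; exact ⟨y, rfl⟩
  · rintro ⟨y, rfl⟩; exact ⟨y, rfl⟩

theorem fwd (M M' : Type) [AddCommGroup M] [Module L M] [AddCommGroup M'] [Module L M']
    (f : M → M') (hbij : Function.Bijective f) (hq : IsBqHom f) :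
    (∃ h : Dsub M ≃ₗ[L] Dsub M',
      ∀ A : Set M, IsCR M A → (0 : M) ∈ A →
        ∃ A' : Set M', IsCR M' A' ∧
          ∃ g : M → M', Set.BijOn g (Os A) (Os A') ∧ g '' A = A' ∧
            (∀ α ∈ A, (1 - sL * tL) • g α = (h ⟨(1 - sL * tL) • α, ⟨α, rfl⟩⟩ : M')) ∧
            (∀ α ∈ A, ∀ ω (hω : ω ∈ Dsub M), sL • α + ω ∈ Os A →
              g (sL • α + ω) = sL • g α + (h ⟨ω, hω⟩ : M'))) := by
  obtain ⟨H1, H2, H3, H4⟩ := hq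
  -- step 1 : sL • f 0 = f 0
  have e : f 0 = tL • f 0 + (1 - sL * tL) • f 0 := by simpa using H1 0 0
  have e2 : (sL * tL - tL) • f 0 = 0 := by
    have h' : (1 : L) • f 0 = (tL + (1 - sL * tL)) • f 0 := by
      rw [one_smul, add_smul]; exact e
    have h'' : ((1 : L) - (tL + (1 - sL * tL))) • f 0 = 0 := by
      rw [sub_smul, h', sub_self]
    have hr : ((1 : L) - (tL + (1 - sL * tL))) = sL * tL - tL := by ring
    rwa [hr] at h''
  have hs0 : sL • f 0 = f 0 := by
    have h3 : (sL - 1 : L) • f 0 = 0 := by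
      have hr : (sL - 1 : L) = tLi * (sL * tL - tL) := by
        linear_combination (1 - sL) * tLi_mul_tL
      rw [hr, mul_smul, e2, smul_zero]
    have := sub_eq_zero.mp (by rw [← sub_smul] at *; exact h3 : sL • f 0 - (1:L) • f 0 = 0)
    rwa [one_smul] at this
  have hsi0 : sLi • f 0 = f 0 := by
    calc sLi • f 0 = sLi • (sL • f 0) := by rw [hs0]
    _ = f 0 := by rw [← mul_smul, sLi_mul_sL, one_smul]
  -- step 2 : shift formula
  set G : M → M' := fun y => (1 - sL * tL) • (f y - f 0) with hGdef
  have hadd : ∀ z y : M, f (z + (1 - sL * tL) • y) = f z + G y := by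
    intro z y
    have h1 := H1 (tLi • z) y
    have h2 := H1 (tLi • z) 0
    rw [← mul_smul, tL_mul_tLi, one_smul] at h1 h2
    simp only [smul_zero, add_zero] at h2
    rw [h1, h2, hGdef]
    module
  have key : ∀ y : M, f ((1 - sL * tL) • y) = f 0 + G y := by
    intro y; simpa using hadd 0 y
  have hGadd : ∀ y y' : M, G (y + y') = G y + G y' := by
    intro y y'
    have h1 := key (y + y')
    have h2 : f ((1 - sL * tL) • (y + y')) = f 0 + (G y + G y') := by
      rw [smul_add, hadd ((1 - sL * tL) • y) y', key y, add_assoc]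
    rw [h1] at h2
    exact add_left_cancel h2
  have wd : ∀ y y' : M, (1 - sL * tL) • y = (1 - sL * tL) • y' → G y = G y' := by
    intro y y' hyy
    have h1 := key y
    rw [hyy, key y'] at h1
    exact (add_left_cancel h1).symm
  -- step 3 : G commutes with generators
  have key2 : ∀ (c : L) (u v : M'), c • u = u →
      (1 - sL * tL) • (c • v - u) = c • ((1 - sL * tL) • (v - u)) := by
    intro c u v hu
    have h1 : c • ((1 - sL * tL) • (v - u)) = (1 - sL * tL) • (c • v - c • u) := by module
    rw [h1, hu]
  have hGs : ∀ y, G (sL • y) = sL • G y := by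
    intro y; rw [hGdef]; simp only [H2]; exact key2 sL (f 0) (f y) hs0
  have hGsi : ∀ y, G (sLi • y) = sLi • G y := by
    intro y; rw [hGdef]; simp only [H4]; exact key2 sLi (f 0) (f y) hsi0
  have hst0 : (sL * tL) • f 0 = tL • f 0 := by rw [mul_comm, mul_smul, hs0]
  have hGt : ∀ y, G (tL • y) = tL • G y := by
    intro y
    have hf : f (tL • y) = tL • f y + (1 - sL * tL) • f 0 := by simpa using H1 y 0
    rw [hGdef]
    simp only [hf]
    have expand : (1 - sL * tL) • (tL • f y + (1 - sL * tL) • f 0 - f 0)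
        = tL • ((1 - sL * tL) • (f y - f 0))
          + (1 - sL * tL) • (tL • f 0 - (sL * tL) • f 0) := by module
    rw [expand, hst0, sub_self, smul_zero, add_zero]
  have hsti0 : (sLi * tLi) • f 0 = tLi • f 0 := by rw [mul_comm, mul_smul, hsi0]
  have hGti : ∀ y, G (tLi • y) = tLi • G y := by
    intro y
    have hf : f (tLi • y) = tLi • f y + (1 - sLi * tLi) • f 0 := by simpa using H3 y 0
    rw [hGdef]
    simp only [hf]
    have expand : (1 - sL * tL) • (tLi • f y + (1 - sLi * tLi) • f 0 - f 0)
        = tLi • ((1 - sL * tL) • (f y - f 0))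
          + (1 - sL * tL) • (tLi • f 0 - (sLi * tLi) • f 0) := by module
    rw [expand, hsti0, sub_self, smul_zero, add_zero]
  have Glin : ∀ (c : L) (y : M), G (c • y) = c • G y :=
    smul_ext (AddMonoidHom.mk' G (fun a b => hGadd a b)) hGs hGsi hGt hGti
  have memD' : ∀ y : M, G y ∈ Dsub M' := fun y => ⟨f y - f 0, rfl⟩
  -- step 4 : the linear equivalence
  have hrep0 : ∀ ω : Dsub M, ∃ y : M, (1 - sL * tL) • y = (ω : M) := fun ω => mem_Dsub.mp ω.2
  choose rep hrep using hrep0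
  set Hlin : Dsub M →ₗ[L] Dsub M' :=
    { toFun := fun ω => ⟨G (rep ω), memD' _⟩
      map_add' := by
        intro ω ω'
        apply Subtype.ext
        show G (rep (ω + ω')) = G (rep ω) + G (rep ω')
        rw [← hGadd]
        apply wd
        rw [hrep, smul_add, hrep, hrep, Submodule.coe_add]
      map_smul' := by
        intro c ω
        apply Subtype.ext
        show G (rep (c • ω)) = c • G (rep ω)
        rw [← Glin]
        apply wd
        rw [hrep, smul_comm, hrep, Submodule.coe_smul] } with hHlin
  have Hval : ∀ ω : Dsub M, (Hlin ω : M') = G (rep ω) := fun ω => rfl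
  have hinj : Function.Injective Hlin := by
    intro ω ω' hωω'
    have h1 : G (rep ω) = G (rep ω') := congrArg Subtype.val hωω'
    have h2 : f ((1 - sL * tL) • rep ω) = f ((1 - sL * tL) • rep ω') := by
      rw [key, key, h1]
    have h3 := hbij.injective h2
    apply Subtype.ext
    rw [← hrep ω, ← hrep ω', h3]
  have hsurj : Function.Surjective Hlin := by
    intro ω'
    obtain ⟨y', hy'⟩ := mem_Dsub.mp ω'.2
    obtain ⟨y, hy⟩ := hbij.surjective (y' + f 0)
    refine ⟨⟨(1 - sL * tL) • y, ⟨y, rfl⟩⟩, Subtype.ext ?_⟩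
    rw [Hval]
    have h1 : G (rep ⟨(1 - sL * tL) • y, ⟨y, rfl⟩⟩) = G y := by
      apply wd; rw [hrep]
    rw [h1, hGdef]
    show (1 - sL * tL) • (f y - f 0) = _
    rw [hy, add_sub_cancel_right, hy']
  refine ⟨LinearEquiv.ofBijective Hlin (show Function.Bijective Hlin from ⟨hinj, hsurj⟩), ?_⟩
  intro A hA h0A
  -- the map g
  set g : M → M' := fun x => f x - f 0 with hgdef
  have hGg : ∀ y : M, (1 - sL * tL) • g y = G y := fun y => rfl
  have hfu : ∀ (n : ℤ) (x : M), f (((sU ^ n : Lˣ) : L) • x) = ((sU ^ n : Lˣ) : L) • f x := by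
    intro n
    induction n using Int.induction_on with
    | zero => simp
    | succ n ih =>
        intro x
        rw [zpow_add_one, Units.val_mul, mul_smul, mul_smul,
          show (sU : Lˣ).val = sL from rfl, ih, H2]
    | pred n ih =>
        intro x
        rw [zpow_sub_one, Units.val_mul, mul_smul, mul_smul,
          show ((sU⁻¹ : Lˣ) : L) = sLi from rfl, ih, H4]
  have hf0u : ∀ n : ℤ, ((sU ^ n : Lˣ) : L) • f 0 = f 0 := by
    intro n; have h5 := hfu n 0; rw [smul_zero] at h5; exact h5.symm
  have hgu : ∀ (n : ℤ) (x : M), g (((sU ^ n : Lˣ) : L) • x) = ((sU ^ n : Lˣ) : L) • g x := by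
    intro n x
    rw [hgdef]
    show f (((sU ^ n : Lˣ) : L) • x) - f 0 = ((sU ^ n : Lˣ) : L) • (f x - f 0)
    rw [hfu, smul_sub, hf0u]
  have hg_inj : Function.Injective g := by
    intro a b hab
    apply hbij.injective
    have : f a - f 0 = f b - f 0 := hab
    exact sub_left_injective this
  have Gsurj : ∀ v' : M', ∃ y : M, G y = (1 - sL * tL) • v' := by
    intro v'
    obtain ⟨y, hy⟩ := hbij.surjective (v' + f 0)
    exact ⟨y, by rw [hGdef]; show (1 - sL * tL) • (f y - f 0) = _; rw [hy, add_sub_cancel_right]⟩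
  refine ⟨g '' A, ?_, g, ?_, rfl, ?_, ?_⟩
  · -- IsCR M' (g '' A)
    intro x'
    obtain ⟨y0, hy0⟩ := hbij.surjective (x' + f 0)
    obtain ⟨a, ⟨haA, haD⟩, huniq⟩ := hA y0
    obtain ⟨w, hw⟩ := mem_Dsub.mp haD
    have hy0a : y0 = a + (1 - sL * tL) • w := by rw [hw]; abel
    have hx'a : x' - g a = G w := by
      have h1 : f y0 = f a + G w := by rw [hy0a]; exact hadd a w
      rw [hgdef]
      show x' - (f a - f 0) = G w
      have h2 : x' = f y0 - f 0 := by rw [hy0]; abel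
      rw [h2, h1]; abel
    refine ⟨g a, ⟨⟨a, haA, rfl⟩, by rw [hx'a]; exact memD' w⟩, ?_⟩
    rintro b' ⟨⟨b, hbA, rfl⟩, hbD⟩
    obtain ⟨w', hw'⟩ := mem_Dsub.mp hbD
    obtain ⟨y, hy⟩ := Gsurj w'
    have h1 : f y0 = f (b + (1 - sL * tL) • y) := by
      rw [hadd b y, hy, hw']
      have h2 : x' = f y0 - f 0 := by rw [hy0]; abel
      rw [hgdef] at hw' ⊢
      show f y0 = f b + (x' - (f b - f 0))
      rw [h2]
      abel
    have h3 := hbij.injective h1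
    have h4 : b = a := huniq b ⟨hbA, by rw [h3]; exact ⟨y, by show (1 - sL*tL) • y = _; abel⟩⟩
    rw [h4]
  · -- BijOn
    refine ⟨?_, hg_inj.injOn, ?_⟩
    · rintro x ⟨n, x0, hx0A, rfl⟩
      exact ⟨n, g x0, ⟨x0, hx0A, rfl⟩, hgu n x0⟩
    · rintro y ⟨n, x0', ⟨x0, hx0A, rfl⟩, rfl⟩
      exact ⟨((sU ^ n : Lˣ) : L) • x0, ⟨n, x0, hx0A, rfl⟩, hgu n x0⟩
  · -- first compatibility
    intro α hαA
    rw [LinearEquiv.ofBijective_apply, Hval, hGg]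
    symm; apply wd; rw [hrep]
  · -- second compatibility
    intro α hαA ω hω _
    obtain ⟨w, hw⟩ := mem_Dsub.mp hω
    rw [LinearEquiv.ofBijective_apply, Hval]
    have h1 : G (rep ⟨ω, hω⟩) = G w := by apply wd; rw [hrep, hw]
    rw [h1, ← hw]
    show f (sL • α + (1 - sL * tL) • w) - f 0 = sL • (f α - f 0) + G w
    rw [hadd (sL • α) w, H2, smul_sub, hs0]
    abel

lemma sc1 : (-sLi) * (1 - sL * tL) = tL - sLi := by
  linear_combination tL * sLi_mul_sL

lemma sc2 : (-(sLi * tLi)) * (1 - sL * tL) = 1 - sLi * tLi := by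
  linear_combination (sL * sLi) * tL_mul_tLi + sL_mul_sLi

theorem bwd (M M' : Type) [AddCommGroup M] [Module L M] [AddCommGroup M'] [Module L M']
    (h : Dsub M ≃ₗ[L] Dsub M')
    (HA : ∀ A : Set M, IsCR M A → (0 : M) ∈ A →
        ∃ A' : Set M', IsCR M' A' ∧
          ∃ g : M → M', Set.BijOn g (Os A) (Os A') ∧ g '' A = A' ∧
            (∀ α ∈ A, (1 - sL * tL) • g α = (h ⟨(1 - sL * tL) • α, ⟨α, rfl⟩⟩ : M')) ∧
            (∀ α ∈ A, ∀ ω (hω : ω ∈ Dsub M), sL • α + ω ∈ Os A →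
              g (sL • α + ω) = sL • g α + (h ⟨ω, hω⟩ : M'))) :
    ∃ f : M → M', Function.Bijective f ∧ IsBqHom f := by
  classical
  -- a set of coset representatives containing 0
  set r : (M ⧸ Dsub M) → M := fun c => if c = 0 then 0 else Quotient.out c with hrdef
  have hr : ∀ c : M ⧸ Dsub M, Submodule.Quotient.mk (r c) = c := by
    intro c
    by_cases hc : c = 0
    · simp [hrdef, hc]
    · simp only [hrdef, if_neg hc]
      exact Quotient.out_eq c
  set A : Set M := Set.range r with hAdef
  have hA : IsCR M A := by
    intro x
    refine ⟨r (Submodule.Quotient.mk x), ⟨⟨_, rfl⟩, ?_⟩, ?_⟩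
    · exact (Submodule.Quotient.eq _).mp (hr _).symm
    · rintro b ⟨⟨c, rfl⟩, hbD⟩
      have h1 : Submodule.Quotient.mk x = c := by
        rw [← hr c]; exact (Submodule.Quotient.eq _).mpr hbD
      rw [h1]
  have h0A : (0 : M) ∈ A := ⟨0, by simp [hrdef]⟩
  obtain ⟨A', hA', g, hgbij, hgA, C1, C2⟩ := HA A hA h0A
  choose ρ hP hu using hA
  have hPA : ∀ x, ρ x ∈ A := fun x => (hP x).1
  have hPD : ∀ x, x - ρ x ∈ Dsub M := fun x => (hP x).2
  have hAOs : ∀ {x : M}, x ∈ A → x ∈ Os A := fun hx => ⟨0, _, hx, by simp⟩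
  have hA'g : ∀ α ∈ A, g α ∈ A' := fun α hα => hgA ▸ ⟨α, hα, rfl⟩
  have hDα : ∀ y : M, (1 - sL * tL) • y ∈ Dsub M := fun y => ⟨y, rfl⟩
  set F : M → M' := fun x => g (ρ x) + (h ⟨x - ρ x, hPD x⟩ : M') with hFdef
  have hFeq : ∀ x, F x = g (ρ x) + (h ⟨x - ρ x, hPD x⟩ : M') := fun _ => rfl
  have hρA : ∀ α ∈ A, ρ α = α := by
    intro α hα
    exact (hu α α ⟨hα, by rw [sub_self]; exact zero_mem _⟩).symm
  have hFA : ∀ α ∈ A, F α = g α := by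
    intro α hα
    have e0 : (⟨α - ρ α, hPD α⟩ : Dsub M) = 0 :=
      Subtype.ext (by show α - ρ α = (0 : M); rw [hρA α hα, sub_self])
    rw [hFeq, e0, map_zero, hρA α hα]
    simp
  -- shift formula
  have hshift : ∀ (x ω : M) (hω : ω ∈ Dsub M), F (x + ω) = F x + (h ⟨ω, hω⟩ : M') := by
    intro x ω hω
    have hmem : x + ω - ρ x ∈ Dsub M := by
      have e1 : x + ω - ρ x = (x - ρ x) + ω := by abel
      rw [e1]; exact add_mem (hPD x) hω
    have hρeq : ρ (x + ω) = ρ x := (hu (x + ω) (ρ x) ⟨hPA x, hmem⟩).symm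
    have e0 : (⟨x + ω - ρ (x + ω), hPD (x + ω)⟩ : Dsub M)
        = ⟨x - ρ x, hPD x⟩ + ⟨ω, hω⟩ := Subtype.ext (by
          show x + ω - ρ (x + ω) = (x - ρ x) + ω
          rw [hρeq]; abel)
    rw [hFeq (x + ω), e0, map_add, Submodule.coe_add, hρeq, hFeq x, add_assoc]
  -- s-equivariance
  have hFs : ∀ x, F (sL • x) = sL • F x := by
    intro x
    have hαA := hPA x
    have hβA := hPA (sL • ρ x)
    have hωβ : ρ (sL • ρ x) - sL • ρ x ∈ Dsub M := by
      have e1 : ρ (sL • ρ x) - sL • ρ x = -(sL • ρ x - ρ (sL • ρ x)) := by abel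
      rw [e1]; exact neg_mem (hPD (sL • ρ x))
    have hOsm : sL • ρ x + (ρ (sL • ρ x) - sL • ρ x) ∈ Os A := by
      have e1 : sL • ρ x + (ρ (sL • ρ x) - sL • ρ x) = ρ (sL • ρ x) := by abel
      rw [e1]; exact hAOs hβA
    have hC2 := C2 (ρ x) hαA (ρ (sL • ρ x) - sL • ρ x) hωβ hOsm
    have hgβ : g (ρ (sL • ρ x)) = sL • g (ρ x) + (h ⟨ρ (sL • ρ x) - sL • ρ x, hωβ⟩ : M') := by
      rw [← hC2]; congr 1; abel
    have hmem2 : sL • x - ρ (sL • ρ x) ∈ Dsub M := by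
      have h1 : sL • x - sL • ρ x ∈ Dsub M := by
        rw [← smul_sub]; exact Submodule.smul_mem _ _ (hPD x)
      have e1 : sL • x - ρ (sL • ρ x) = (sL • x - sL • ρ x) - (ρ (sL • ρ x) - sL • ρ x) := by
        abel
      rw [e1]; exact sub_mem h1 hωβ
    have hρs : ρ (sL • x) = ρ (sL • ρ x) := (hu (sL • x) (ρ (sL • ρ x)) ⟨hβA, hmem2⟩).symm
    have e0 : (⟨sL • x - ρ (sL • x), hPD (sL • x)⟩ : Dsub M)
        = sL • ⟨x - ρ x, hPD x⟩ - ⟨ρ (sL • ρ x) - sL • ρ x, hωβ⟩ := Subtype.ext (by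
          show sL • x - ρ (sL • x) = sL • (x - ρ x) - (ρ (sL • ρ x) - sL • ρ x)
          rw [hρs, smul_sub]; abel)
    rw [hFeq (sL • x), e0, map_sub, map_smul, Submodule.coe_sub, SetLike.val_smul, hρs, hgβ,
      hFeq x, smul_add]
    abel
  have hFsi : ∀ x, F (sLi • x) = sLi • F x := by
    intro x
    have h1 := hFs (sLi • x)
    rw [← mul_smul, sL_mul_sLi, one_smul] at h1
    rw [h1, ← mul_smul, sLi_mul_sL, one_smul]
  -- t-equivariance
  have hFt : ∀ x, F (tL • x) = tL • F x := by
    intro x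
    have hαA := hPA x
    have h1 : tL • (x - ρ x) ∈ Dsub M := Submodule.smul_mem _ _ (hPD x)
    have h2 : (tL - sLi) • ρ x ∈ Dsub M := ⟨(-sLi) • ρ x, by
      show (1 - sL * tL) • ((-sLi) • ρ x) = _
      rw [← mul_smul, mul_comm, sc1]⟩
    have hω0 : tL • x - sLi • ρ x ∈ Dsub M := by
      have e1 : tL • x - sLi • ρ x = tL • (x - ρ x) + (tL - sLi) • ρ x := by
        simp only [smul_sub, sub_smul]; abel
      rw [e1]; exact add_mem h1 h2
    have hdecomp : tL • x = sLi • ρ x + (tL • x - sLi • ρ x) := by abel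
    rw [hdecomp, hshift (sLi • ρ x) _ hω0, hFsi, hFA (ρ x) hαA]
    have e0 : (⟨tL • x - sLi • ρ x, hω0⟩ : Dsub M)
        = tL • ⟨x - ρ x, hPD x⟩ + (-sLi) • ⟨(1 - sL * tL) • ρ x, hDα (ρ x)⟩ :=
      Subtype.ext (by
        show tL • x - sLi • ρ x = tL • (x - ρ x) + (-sLi) • ((1 - sL * tL) • ρ x)
        rw [← mul_smul, sc1]
        simp only [smul_sub, sub_smul]; abel)
    rw [e0, map_add, map_smul, map_smul, Submodule.coe_add, SetLike.val_smul, SetLike.val_smul,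
      ← C1 (ρ x) hαA, hFeq x, smul_add]
    have hsc2 : (-sLi) • ((1 - sL * tL) • g (ρ x)) = tL • g (ρ x) - sLi • g (ρ x) := by
      rw [← mul_smul, sc1, sub_smul]
    rw [hsc2]
    abel
  have hFti : ∀ x, F (tLi • x) = tLi • F x := by
    intro x
    have h1 := hFt (tLi • x)
    rw [← mul_smul, tL_mul_tLi, one_smul] at h1
    rw [h1, ← mul_smul, tLi_mul_tL, one_smul]
  -- compatibility with (1-st)
  have hFD : ∀ y : M, (h ⟨(1 - sL * tL) • y, hDα y⟩ : M') = (1 - sL * tL) • F y := by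
    intro y
    have e0 : (⟨(1 - sL * tL) • y, hDα y⟩ : Dsub M)
        = ⟨(1 - sL * tL) • ρ y, hDα (ρ y)⟩ + (1 - sL * tL) • ⟨y - ρ y, hPD y⟩ :=
      Subtype.ext (by
        show (1 - sL * tL) • y = (1 - sL * tL) • ρ y + (1 - sL * tL) • (y - ρ y)
        rw [smul_sub]; abel)
    rw [e0, map_add, map_smul, Submodule.coe_add, SetLike.val_smul, ← C1 (ρ y) (hPA y),
      hFeq y, smul_add]
  -- bijectivity
  have hinj : Function.Injective F := by
    intro x x' hxx'
    have hgg : g (ρ x) = g (ρ x') := by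
      obtain ⟨a', -, hu'⟩ := hA' (g (ρ x))
      have hm1 : g (ρ x) ∈ A' := hA'g _ (hPA x)
      have hm2 : g (ρ x') ∈ A' := hA'g _ (hPA x')
      have hsub : g (ρ x) - g (ρ x')
          = (h ⟨x' - ρ x', hPD x'⟩ : M') - (h ⟨x - ρ x, hPD x⟩ : M') := by
        have e3 := hxx'
        rw [hFeq, hFeq] at e3
        rw [eq_sub_of_add_eq e3]; abel
      have e1 := hu' (g (ρ x)) ⟨hm1, by rw [sub_self]; exact zero_mem _⟩
      have e2 := hu' (g (ρ x')) ⟨hm2, by rw [hsub]; exact sub_mem (h _).2 (h _).2⟩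
      exact e1.trans e2.symm
    have hρeq : ρ x = ρ x' := hgbij.2.1 (hAOs (hPA x)) (hAOs (hPA x')) hgg
    have e3 := hxx'
    rw [hFeq, hFeq, hgg] at e3
    have e5 : (⟨x - ρ x, hPD x⟩ : Dsub M) = ⟨x' - ρ x', hPD x'⟩ :=
      h.injective (Subtype.ext (add_left_cancel e3))
    have e6 : x - ρ x = x' - ρ x' := congrArg Subtype.val e5
    rw [hρeq] at e6
    exact sub_left_injective e6
  have hsurj : Function.Surjective F := by
    intro x'
    obtain ⟨a', ⟨ha'A, ha'D⟩, -⟩ := hA' x'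
    rw [← hgA] at ha'A
    obtain ⟨α, hαA, rfl⟩ := ha'A
    obtain ⟨ω, hω⟩ := h.surjective ⟨x' - g α, ha'D⟩
    refine ⟨α + ω.1, ?_⟩
    rw [hshift α ω.1 ω.2, hFA α hαA]
    have hω' : h ⟨ω.1, ω.2⟩ = ⟨x' - g α, ha'D⟩ := hω
    rw [hω']
    show g α + (x' - g α) = x'
    abel
  refine ⟨F, ⟨hinj, hsurj⟩, fun x y => ?_, hFs, fun x y => ?_, hFsi⟩
  · rw [hshift (tL • x) ((1 - sL * tL) • y) (hDα y), hFt, hFD y]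
  · have hmem : (1 - sLi * tLi) • y ∈ Dsub M := ⟨(-(sLi * tLi)) • y, by
      show (1 - sL * tL) • ((-(sLi * tLi)) • y) = _
      rw [← mul_smul, mul_comm, sc2]⟩
    rw [hshift (tLi • x) ((1 - sLi * tLi) • y) hmem, hFti]
    congr 1
    have e0 : (⟨(1 - sLi * tLi) • y, hmem⟩ : Dsub M)
        = (-(sLi * tLi)) • ⟨(1 - sL * tL) • y, hDα y⟩ := Subtype.ext (by
          show (1 - sLi * tLi) • y = (-(sLi * tLi)) • ((1 - sL * tL) • y)
          rw [← mul_smul, sc2])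
    rw [e0, map_smul, SetLike.val_smul, hFD y, ← mul_smul, sc2]

/-- Main theorem: two Alexander biquandles are isomorphic iff their `(1-st)`-submodules
are isomorphic as modules compatibly with a bijection of `s`-orbits of coset
representatives. -/
theorem stmt_15 (M M' : Type) [AddCommGroup M] [Module L M] [AddCommGroup M'] [Module L M'] :
    (∃ f : M → M', Function.Bijective f ∧ IsBqHom f) ↔
    (∃ h : Dsub M ≃ₗ[L] Dsub M',
      ∀ A : Set M, IsCR M A → (0 : M) ∈ A →
        ∃ A' : Set M', IsCR M' A' ∧
          ∃ g : M → M', Set.BijOn g (Os A) (Os A') ∧ g '' A = A' ∧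
            (∀ α ∈ A, (1 - sL * tL) • g α = (h ⟨(1 - sL * tL) • α, ⟨α, rfl⟩⟩ : M')) ∧
            (∀ α ∈ A, ∀ ω (hω : ω ∈ Dsub M), sL • α + ω ∈ Os A →
              g (sL • α + ω) = sL • g α + (h ⟨ω, hω⟩ : M'))) := by
  constructor
  · rintro ⟨f, hb, hq⟩
    exact fwd M M' f hb hq
  · rintro ⟨h, hh⟩
    exact bwd M M' h hh
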